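/- For all s, s′ ∈ B with s ≺ s′, the intersection of the closed intervals [τ(s), τ(s + ⟨1⟩)] and [τ(s′), τ(s′ + ⟨1⟩)] is either empty or equal to the singleton {τ(s′)}. -/

import Mathlib

/-- The `j`-th entry (1-indexed) of a finite sequence of positive naturals,
viewed as a natural number. Only used for `1 ≤ j ≤ s.length`. -/
def nthSeq (s : List ℕ+) (j : ℕ) : ℕ := ↑(s.getD (j - 1) 1)

/-- The linear order `⪯` on finite sequences of positive natural numbers:
`s ⪯ t` iff either (a) there is an index `j ≤ min (ℓ s) (ℓ t)` which is the first index where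
`s` and `t` differ, and there `s j < t j`, or (b) `ℓ s ≤ ℓ t` and `t` extends `s`. -/
def sle (s t : List ℕ+) : Prop :=
  (∃ j, 1 ≤ j ∧ j ≤ min s.length t.length ∧
     (∀ i, 1 ≤ i → i < j → nthSeq s i = nthSeq t i) ∧ nthSeq s j < nthSeq t j) ∨
  (s.length ≤ t.length ∧ ∀ j, 1 ≤ j → j ≤ s.length → nthSeq s j = nthSeq t j)

/-- The strict version `≺` of the order `⪯`. -/
def slt (s t : List ℕ+) : Prop := sle s t ∧ s ≠ t

lemma one_le_nthSeq (s : List ℕ+) (j : ℕ) : 1 ≤ nthSeq s j := (s.getD (j-1) 1).pos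

lemma nthSeq_eq_getElem (s : List ℕ+) {j : ℕ} (h : j - 1 < s.length) :
    nthSeq s j = ↑(s[j-1]'h) := by
  unfold nthSeq; rw [List.getD_eq_getElem _ _ h]

lemma seq_ext {a b : List ℕ+} (hl : a.length = b.length)
    (h : ∀ j, 1 ≤ j → j ≤ a.length → nthSeq a j = nthSeq b j) : a = b := by
  apply List.ext_getElem hl
  intro n h1 h2
  have := h (n+1) (by omega) (by omega)
  rw [nthSeq_eq_getElem a (by omega), nthSeq_eq_getElem b (by omega)] at this
  simp only [Nat.add_sub_cancel] at this
  exact PNat.coe_inj.mp this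

lemma sle_trans {a b c : List ℕ+} (h1 : sle a b) (h2 : sle b c) : sle a c := by
  rcases h1 with ⟨j1, hj11, hj1m, heq1, hlt1⟩ | ⟨hl1, heq1⟩
  · rw [le_min_iff] at hj1m
    rcases h2 with ⟨j2, hj21, hj2m, heq2, hlt2⟩ | ⟨hl2, heq2⟩
    · rw [le_min_iff] at hj2m
      rcases lt_trichotomy j1 j2 with hj | hj | hj
      · left
        refine ⟨j1, hj11, le_min hj1m.1 (by omega), fun i hi1 hi2 => ?_, ?_⟩
        · rw [heq1 i hi1 hi2, heq2 i hi1 (by omega)]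
        · rw [← heq2 j1 hj11 hj]; exact hlt1
      · subst hj
        left
        refine ⟨j1, hj11, le_min hj1m.1 hj2m.2, fun i hi1 hi2 => ?_, lt_trans hlt1 hlt2⟩
        rw [heq1 i hi1 hi2, heq2 i hi1 hi2]
      · left
        refine ⟨j2, hj21, le_min (by omega) hj2m.2, fun i hi1 hi2 => ?_, ?_⟩
        · rw [heq1 i hi1 (by omega), heq2 i hi1 hi2]
        · rw [heq1 j2 hj21 hj]; exact hlt2
    · left
      refine ⟨j1, hj11, le_min hj1m.1 (by omega), fun i hi1 hi2 => ?_, ?_⟩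
      · rw [heq1 i hi1 hi2, heq2 i hi1 (by omega)]
      · rw [← heq2 j1 hj11 hj1m.2]; exact hlt1
  · rcases h2 with ⟨j2, hj21, hj2m, heq2, hlt2⟩ | ⟨hl2, heq2⟩
    · rw [le_min_iff] at hj2m
      by_cases hj : j2 ≤ a.length
      · left
        refine ⟨j2, hj21, le_min hj hj2m.2, fun i hi1 hi2 => ?_, ?_⟩
        · rw [heq1 i hi1 (by omega), heq2 i hi1 hi2]
        · rw [heq1 j2 hj21 hj]; exact hlt2
      · right
        refine ⟨by omega, fun j hj1 hj2 => ?_⟩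
        rw [heq1 j hj1 hj2, heq2 j hj1 (by omega)]
    · right
      exact ⟨le_trans hl1 hl2, fun j hj1 hj2 => by
        rw [heq1 j hj1 hj2, heq2 j hj1 (by omega)]⟩

lemma sle_antisymm {a b : List ℕ+} (h1 : sle a b) (h2 : sle b a) : a = b := by
  rcases h1 with ⟨j1, hj11, hj1m, heq1, hlt1⟩ | ⟨hl1, heq1⟩
  · rw [le_min_iff] at hj1m
    rcases h2 with ⟨j2, hj21, hj2m, heq2, hlt2⟩ | ⟨hl2, heq2⟩
    · rw [le_min_iff] at hj2m
      exfalso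
      rcases lt_trichotomy j1 j2 with hj | hj | hj
      · have := heq2 j1 hj11 hj; omega
      · subst hj; omega
      · have := heq1 j2 hj21 hj; omega
    · exfalso
      have := heq2 j1 hj11 hj1m.2
      omega
  · rcases h2 with ⟨j2, hj21, hj2m, heq2, hlt2⟩ | ⟨hl2, heq2⟩
    · rw [le_min_iff] at hj2m
      exfalso
      have := heq1 j2 hj21 hj2m.2
      omega
    · exact seq_ext (le_antisymm hl1 hl2) heq1

lemma nthSeq_append_left {s t : List ℕ+} {j : ℕ} (h1 : 1 ≤ j) (h2 : j ≤ s.length) :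
    nthSeq (s ++ t) j = nthSeq s j := by
  unfold nthSeq
  rw [List.getD_append _ _ _ _ (by omega)]

lemma nthSeq_append_one (s : List ℕ+) : nthSeq (s ++ [1]) (s.length + 1) = 1 := by
  unfold nthSeq
  rw [List.getD_append_right _ _ _ _ (by omega)]
  simp

lemma ne_append_one (s : List ℕ+) : s ≠ s ++ [1] := by
  intro h
  have := congrArg List.length h
  simp at this

lemma sle_append_one (s : List ℕ+) : sle s (s ++ [1]) := by
  right
  refine ⟨by simp, fun j hj1 hj2 => (nthSeq_append_left hj1 hj2).symm⟩

lemma slt_append_one (s : List ℕ+) : slt s (s ++ [1]) := ⟨sle_append_one s, ne_append_one s⟩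

lemma sle_append_one_of_slt {s s' : List ℕ+} (h : slt s s') : sle (s ++ [1]) s' := by
  rcases h.1 with ⟨j, hj1, hjm, heq, hlt⟩ | ⟨hl, heq⟩
  · rw [le_min_iff] at hjm
    left
    refine ⟨j, hj1, le_min (by simp; omega) hjm.2, fun i hi1 hi2 => ?_, ?_⟩
    · rw [nthSeq_append_left hi1 (by omega)]; exact heq i hi1 hi2
    · rw [nthSeq_append_left hj1 hjm.1]; exact hlt
  · have hne : s.length < s'.length := by
      rcases lt_or_eq_of_le hl with h' | h'
      · exact h'
      · exact absurd (seq_ext h' heq) h.2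
    rcases lt_or_eq_of_le (one_le_nthSeq s' (s.length + 1)) with h' | h'
    · left
      refine ⟨s.length + 1, by omega, le_min (by simp) (by omega), fun i hi1 hi2 => ?_, ?_⟩
      · rw [nthSeq_append_left hi1 (by omega)]; exact heq i hi1 (by omega)
      · rw [nthSeq_append_one]; exact h'
    · right
      refine ⟨by simp; omega, fun j hj1 hj2 => ?_⟩
      simp only [List.length_append, List.length_cons, List.length_nil] at hj2
      by_cases h'' : j ≤ s.length
      · rw [nthSeq_append_left hj1 h'']; exact heq j hj1 h''
      · have hj' : j = s.length + 1 := by omega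
        rw [hj', nthSeq_append_one]; exact h'
/-- The set `B` of nonempty sequences `s` with `s i ≤ i` for all `1 ≤ i ≤ ℓ s`. -/
def BSet : Set (List ℕ+) := {s | 1 ≤ s.length ∧ ∀ i, 1 ≤ i → i ≤ s.length → nthSeq s i ≤ i}

/-- `λ n = 1 / (2^n n!)`. -/
noncomputable def lam (n : ℕ) : ℝ := 1 / ((2 : ℝ) ^ n * (n.factorial : ℝ))

/-- `τ s = Σ_{t ∈ B, t ≺ s} λ (ℓ t)`. -/
noncomputable def tau (s : List ℕ+) : ℝ :=
  ∑' t : {t : List ℕ+ // t ∈ BSet ∧ slt t s}, lam t.1.length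

lemma lam_nonneg (n : ℕ) : 0 ≤ lam n := by
  unfold lam; positivity

/-- The sigma type used to bound the sums over `B`. -/
abbrev SigT := Σ n : ℕ, ∀ i : Fin n, Fin ((i : ℕ) + 1)

noncomputable def gfun : SigT → ℝ := fun p => lam p.1

lemma summable_gfun : Summable gfun := by
  have : gfun = fun p : SigT => lam p.1 := rfl
  rw [this, summable_sigma_of_nonneg (fun p : SigT => lam_nonneg p.1)]
  constructor
  · intro n; exact Summable.of_finite
  · have hcard : ∀ n : ℕ, (Fintype.card (∀ i : Fin n, Fin ((i : ℕ) + 1)) : ℝ) = (n.factorial : ℝ) := by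
      intro n
      rw [Fintype.card_pi]
      norm_cast
      simp only [Fintype.card_fin]
      rw [Fin.prod_univ_eq_prod_range (fun i => i + 1) n,
        Finset.prod_range_add_one_eq_factorial]
    have heq : (fun n : ℕ => ∑' _ : (∀ i : Fin n, Fin ((i : ℕ) + 1)), lam n)
        = fun n : ℕ => ((1:ℝ)/2) ^ n := by
      funext n
      rw [tsum_fintype]
      simp only [Finset.sum_const, Finset.card_univ, nsmul_eq_mul]
      rw [hcard, lam]
      have h1 : (n.factorial : ℝ) ≠ 0 := Nat.cast_ne_zero.mpr n.factorial_ne_zero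
      field_simp
      rw [← mul_pow]; norm_num
    rw [heq]
    exact summable_geometric_of_lt_one (by norm_num) (by norm_num)

/-- Decoding map, left inverse to the encoding of lists in `B` into `SigT`. -/
def rho (p : SigT) : List ℕ+ :=
  List.ofFn (fun i : Fin p.1 => (⟨(p.2 i : ℕ) + 1, by omega⟩ : ℕ+))

lemma summable_tau (s : List ℕ+) :
    Summable (fun t : {t : List ℕ+ // t ∈ BSet ∧ slt t s} => lam t.1.length) := by
  have hb : ∀ (t : {t : List ℕ+ // t ∈ BSet ∧ slt t s}) (i : Fin t.1.length),
      ((t.1.get i : ℕ)) - 1 < (i : ℕ) + 1 := by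
    intro t i
    have h1 := t.2.1.2 ((i : ℕ) + 1) (by omega) (by omega)
    rw [nthSeq_eq_getElem t.1 (by simp)] at h1
    simp only [Nat.add_sub_cancel] at h1
    have h2 : (t.1.get i : ℕ) = (t.1[(i : ℕ)]'i.isLt : ℕ) := rfl
    omega
  let ι : {t : List ℕ+ // t ∈ BSet ∧ slt t s} → SigT :=
    fun t => ⟨t.1.length, fun i => ⟨(t.1.get i : ℕ) - 1, hb t i⟩⟩
  have hrho : ∀ t, rho (ι t) = t.1 := by
    intro t
    apply List.ext_getElem (by simp only [rho]; exact List.length_ofFn)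
    intro n h1 h2
    simp only [rho, ι, List.getElem_ofFn]
    apply PNat.coe_inj.mp
    have hn : n < t.1.length := h2
    erw [List.getElem_ofFn]
    have hpos : 1 ≤ (t.1[n]'hn : ℕ) := (t.1[n]'hn).pos
    have hget : (t.1.get ⟨n, hn⟩ : ℕ) = (t.1[n]'hn : ℕ) := rfl
    show (t.1.get ⟨n, hn⟩ : ℕ) - 1 + 1 = (t.1[n]'hn : ℕ)
    omega
  have hinj : Function.Injective ι := by
    intro a b hab
    have : a.1 = b.1 := by rw [← hrho a, ← hrho b, hab]
    exact Subtype.ext this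
  have := summable_gfun.comp_injective hinj
  exact this

lemma tau_mono {t t' : List ℕ+} (h : ∀ u, u ∈ BSet → slt u t → slt u t') : tau t ≤ tau t' := by
  unfold tau
  apply Summable.tsum_le_tsum_of_inj
    (fun u : {u : List ℕ+ // u ∈ BSet ∧ slt u t} =>
      (⟨u.1, u.2.1, h u.1 u.2.1 u.2.2⟩ : {u : List ℕ+ // u ∈ BSet ∧ slt u t'}))
  · intro a b hab
    simp only [Subtype.mk.injEq] at hab
    exact Subtype.ext hab
  · intro c _
    exact lam_nonneg _
  · intro i
    exact le_refl _
  · exact summable_tau t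
  · exact summable_tau t'
/-- For all `s, s' ∈ B` with `s ≺ s'`, the intersection
`[τ s, τ (s + ⟨1⟩)] ∩ [τ s', τ (s' + ⟨1⟩)]` is either empty or the singleton `{τ s'}`. -/
theorem Icc_inter_Icc_eq_empty_or_singleton (s s' : List ℕ+)
    (hs : s ∈ BSet) (hs' : s' ∈ BSet) (h : slt s s') :
    Set.Icc (tau s) (tau (s ++ [1])) ∩ Set.Icc (tau s') (tau (s' ++ [1])) = ∅ ∨
    Set.Icc (tau s) (tau (s ++ [1])) ∩ Set.Icc (tau s') (tau (s' ++ [1])) = {tau s'} := by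
  have hkey : sle (s ++ [1]) s' := sle_append_one_of_slt h
  have hext : ∀ r : List ℕ+, tau r ≤ tau (r ++ [1]) := by
    intro r
    apply tau_mono
    intro u _ hus
    refine ⟨sle_trans hus.1 (sle_append_one r), ?_⟩
    intro he
    have h2 : sle (r ++ [1]) r := he ▸ hus.1
    exact ne_append_one r (sle_antisymm (sle_append_one r) h2)
  have hab : tau s ≤ tau (s ++ [1]) := hext s
  have hcd : tau s' ≤ tau (s' ++ [1]) := hext s'
  have hbc : tau (s ++ [1]) ≤ tau s' := by
    apply tau_mono
    intro u _ hus
    refine ⟨sle_trans hus.1 hkey, ?_⟩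
    intro he
    have h2 : sle s' (s ++ [1]) := he ▸ hus.1
    exact hus.2 (he.trans (sle_antisymm h2 hkey))
  rcases eq_or_lt_of_le hbc with heq | hlt
  · right
    rw [Set.Icc_inter_Icc, sup_eq_right.mpr (hab.trans hbc), inf_eq_left.mpr (hbc.trans hcd),
      heq, Set.Icc_self]
  · left
    rw [Set.Icc_inter_Icc, sup_eq_right.mpr (hab.trans hbc), inf_eq_left.mpr (hbc.trans hcd)]
    exact Set.Icc_eq_empty (not_le.mpr hlt)
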